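/- Let m, n be real numbers with m > n > 1 and let 𝔠 < 0 be a real constant. Define C(H) = 1 + H + 𝔠 * H^(-n/(m-n)) for H > 0. Then for every H > 0 one has 1 - C(H) + H = (-𝔠) * H^(-n/(m-n)) > 0 and the flux is constant along the curve: H^n * (1 - C(H) + H)^(m-n) = (-𝔠)^(m-n). In other words, the slow paths are constant-flux contours. -/
import Mathlib


/-- Along the slow path `C(H) = 1 + H + 𝔠 * H^(-n/(m-n))` with `𝔠 < 0`, the porosity is
`1 - C(H) + H = (-𝔠) * H^(-n/(m-n)) > 0` and the flux is constant:
`H^n * (1 - C(H) + H)^(m-n) = (-𝔠)^(m-n)`; slow paths are constant-flux contours. -/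
theorem slowPath_constant_flux (m n 𝔠 : ℝ) (hmn : n < m) (hn : 1 < n) (h𝔠 : 𝔠 < 0) :
    ∀ H : ℝ, 0 < H →
      (1 - (1 + H + 𝔠 * H ^ (-n / (m - n))) + H = (-𝔠) * H ^ (-n / (m - n)) ∧
       0 < (-𝔠) * H ^ (-n / (m - n)) ∧
       H ^ n * (1 - (1 + H + 𝔠 * H ^ (-n / (m - n))) + H) ^ (m - n) = (-𝔠) ^ (m - n)) := by
  intro H hH
  have h𝔠' : 0 < -𝔠 := by linarith
  have hpow : 0 < H ^ (-n / (m - n)) := Real.rpow_pos_of_pos hH _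
  have heq : 1 - (1 + H + 𝔠 * H ^ (-n / (m - n))) + H = (-𝔠) * H ^ (-n / (m - n)) := by
    ring
  refine ⟨heq, mul_pos h𝔠' hpow, ?_⟩
  rw [heq, Real.mul_rpow h𝔠'.le hpow.le, ← Real.rpow_mul hH.le]
  have hmn' : m - n ≠ 0 := by linarith
  have h2 : -n / (m - n) * (m - n) = -n := by field_simp
  rw [h2, ← mul_assoc, mul_comm (H ^ n), mul_assoc, ← Real.rpow_add hH]
  simp
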